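/- Dual grid consistency for odd k (one level): suppose k ≥ 3 is odd. Then for every level ℓ and every fine vertex index n : Fin d → ℤ there exists a coarse vertex index m : Fin d → ℤ such that the closed level-(ℓ+1) dual cell D̄_{ℓ+1,n} is contained in the closed level-ℓ dual cell D̄_{ℓ,m}. Consequently, a dual cell of one level either is contained completely within a dual cell of the next coarser level or its interior is disjoint from that coarser dual cell's interior. -/

import Mathlib

/-- Mesh width `h_ℓ = k^{-ℓ}`. -/
noncomputable def meshWidth (k ℓ : ℕ) : ℝ := ((k : ℝ) ^ ℓ)⁻¹

/-- Closed dual cell `D̄_{ℓ,m}` of the level-`ℓ` vertex with index `m`. -/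
def closedDualCell (k d ℓ : ℕ) (m : Fin d → ℤ) : Set (Fin d → ℝ) :=
  {x | ∀ j, ((m j : ℝ) - 1/2) * meshWidth k ℓ ≤ x j ∧
            x j ≤ ((m j : ℝ) + 1/2) * meshWidth k ℓ}

lemma meshWidth_pos {k : ℕ} (hk : 0 < k) (ℓ : ℕ) : 0 < meshWidth k ℓ := by
  have : (0:ℝ) < (k:ℝ) ^ ℓ := pow_pos (by exact_mod_cast hk) ℓ
  exact inv_pos.mpr this

lemma meshWidth_succ {k : ℕ} (hk : 0 < k) (ℓ : ℕ) :
    meshWidth k ℓ = (k : ℝ) * meshWidth k (ℓ + 1) := by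
  have hk' : (k:ℝ) ≠ 0 := by positivity
  simp only [meshWidth, pow_succ]
  field_simp

lemma cell_subset {k d ℓ : ℕ} (hk : 3 ≤ k) {s : ℤ} (hs : (k:ℤ) = 2 * s + 1)
    (n m : Fin d → ℤ) (h : ∀ j, |n j - k * m j| ≤ s) :
    closedDualCell k d (ℓ+1) n ⊆ closedDualCell k d ℓ m := by
  intro x hx j
  have hk0 : 0 < k := by omega
  have H'pos : 0 < meshWidth k (ℓ+1) := meshWidth_pos hk0 _
  have hrec := meshWidth_succ hk0 ℓ
  obtain ⟨hx1, hx2⟩ := hx j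
  obtain ⟨ha, hb⟩ := abs_le.mp (h j)
  have ha' : ((n j : ℝ)) - (k:ℝ) * (m j : ℝ) ≥ -(s:ℝ) := by exact_mod_cast ha
  have hb' : ((n j : ℝ)) - (k:ℝ) * (m j : ℝ) ≤ (s:ℝ) := by exact_mod_cast hb
  have hks : (k:ℝ) = 2 * (s:ℝ) + 1 := by exact_mod_cast hs
  constructor
  · rw [hrec]
    nlinarith [hx1, H'pos]
  · rw [hrec]
    nlinarith [hx2, H'pos]

lemma choose_index {k : ℕ} (hk : 3 ≤ k) {s : ℤ} (hs : (k:ℤ) = 2 * s + 1) (a : ℤ) :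
    |a - k * ((a + s) / k)| ≤ s := by
  have hk0 : (0:ℤ) < (k:ℤ) := by exact_mod_cast Nat.lt_of_lt_of_le (by norm_num) hk
  have h1 := Int.emod_nonneg (a + s) (ne_of_gt hk0)
  have h2 := Int.emod_lt_of_pos (a + s) hk0
  have h3 := Int.mul_ediv_add_emod (a + s) (k:ℤ)
  rw [abs_le]
  omega

lemma interior_strict {k d ℓ : ℕ} (hk : 0 < k) {m : Fin d → ℤ} {x : Fin d → ℝ}
    (hx : x ∈ interior (closedDualCell k d ℓ m)) (j : Fin d) :
    ((m j : ℝ) - 1/2) * meshWidth k ℓ < x j ∧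
      x j < ((m j : ℝ) + 1/2) * meshWidth k ℓ := by
  obtain ⟨ε, hε, hball⟩ := Metric.isOpen_iff.mp isOpen_interior x hx
  have hhalf : 0 < ε / 2 := by linarith
  have key : ∀ c : ℝ, |c| ≤ ε / 2 →
      Function.update x j (x j + c) ∈ closedDualCell k d ℓ m := by
    intro c hc
    apply interior_subset
    apply hball
    rw [Metric.mem_ball]
    calc dist (Function.update x j (x j + c)) x ≤ ε / 2 := by
          rw [dist_pi_le_iff (le_of_lt hhalf)]
          intro i
          by_cases hij : i = j
          · subst hij
            simp [Real.dist_eq, hc]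
          · simp [Function.update_of_ne hij, le_of_lt hhalf]
      _ < ε := by linarith
  have h1 := (key (ε/2) (by rw [abs_of_pos hhalf])) j
  have h2 := (key (-(ε/2)) (by rw [abs_neg, abs_of_pos hhalf])) j
  simp only [Function.update_self] at h1 h2
  constructor
  · linarith [h2.1]
  · linarith [h1.2]

theorem dual_grid_consistency_one_level (k d : ℕ) (hk : 3 ≤ k) (hodd : Odd k)
    (hd : 1 ≤ d) :
    (∀ ℓ : ℕ, ∀ n : Fin d → ℤ, ∃ m : Fin d → ℤ,
      closedDualCell k d (ℓ + 1) n ⊆ closedDualCell k d ℓ m) ∧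
    (∀ ℓ : ℕ, ∀ n m : Fin d → ℤ,
      closedDualCell k d (ℓ + 1) n ⊆ closedDualCell k d ℓ m ∨
      interior (closedDualCell k d (ℓ + 1) n) ∩ interior (closedDualCell k d ℓ m) = ∅) := by
  have hk0 : 0 < k := by omega
  obtain ⟨s0, hs0⟩ := hodd
  have hs : (k:ℤ) = 2 * (s0:ℤ) + 1 := by exact_mod_cast hs0
  set s : ℤ := (s0:ℤ)
  constructor
  · intro ℓ n
    refine ⟨fun j => (n j + s) / k, cell_subset hk hs n _ fun j => choose_index hk hs (n j)⟩
  · intro ℓ n m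
    set m' : Fin d → ℤ := fun j => (n j + s) / k with hm'
    have hsub : closedDualCell k d (ℓ+1) n ⊆ closedDualCell k d ℓ m' :=
      cell_subset hk hs n _ fun j => choose_index hk hs (n j)
    by_cases hmm : m = m'
    · left; rw [hmm]; exact hsub
    · right
      rw [Set.eq_empty_iff_forall_notMem]
      rintro x ⟨hx1, hx2⟩
      obtain ⟨j, hj⟩ := Function.ne_iff.mp hmm
      have hxm' : x ∈ closedDualCell k d ℓ m' := hsub (interior_subset hx1)
      obtain ⟨hl, hr⟩ := hxm' j
      obtain ⟨hl2, hr2⟩ := interior_strict hk0 hx2 j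
      have Hpos : 0 < meshWidth k ℓ := meshWidth_pos hk0 ℓ
      rcases lt_or_gt_of_ne hj with h | h
      · have h' : m j + 1 ≤ m' j := by omega
        have : ((m j : ℝ)) + 1 ≤ (m' j : ℝ) := by exact_mod_cast h'
        nlinarith
      · have h' : m' j + 1 ≤ m j := by omega
        have : ((m' j : ℝ)) + 1 ≤ (m j : ℝ) := by exact_mod_cast h'
        nlinarith
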